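/- The Pöppe product on the free real vector space over nonempty compositions is associative: for all elements $x, y, z$ of $\mathbb{R}\langle \mathcal{C}\rangle_*$, $(x * y) * z = x * (y * z)$. -/

import Mathlib

open Finset

/-- The set of compositions of `n` (lists of positive integers summing to `n`). -/
def comps : ℕ → Finset (List ℕ+)
  | 0 => {[]}
  | n + 1 =>
    (Finset.range (n + 1)).attach.biUnion fun k =>
      (comps k.1).image fun l =>
        (⟨n + 1 - k.1, Nat.sub_pos_of_lt (Finset.mem_range.mp k.2)⟩ : ℕ+) :: l
  decreasing_by exact Finset.mem_range.mp k.2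

/-- Signature character of a composition. -/
def chi : List ℕ+ → ℕ
  | [] => 1
  | a :: t => Nat.choose ((a : ℕ) + (t.map fun x => (x : ℕ)).sum) (a : ℕ) * chi t

/-- The Pöppe product of two basis compositions `u a` and `b v`:
`(u a) * (b v) = u(a+1)bv + ua(b+1)v + 2·(ua1bv)`, as an element of the free
vector space on compositions (zero if either composition is empty). -/
noncomputable def ppWord (u v : List ℕ+) : List ℕ+ →₀ ℝ :=
  match u.reverse, v with
  | a :: ur, b :: v' =>
      Finsupp.single (((a + 1) :: ur).reverse ++ b :: v') 1
      + Finsupp.single ((a :: ur).reverse ++ (b + 1) :: v') 1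
      + (2 : ℝ) • Finsupp.single ((a :: ur).reverse ++ (1 : ℕ+) :: b :: v') 1
  | _, _ => 0

/-- The bilinear Pöppe product on the free vector space on compositions. -/
noncomputable def poppeMul (x y : List ℕ+ →₀ ℝ) : List ℕ+ →₀ ℝ :=
  x.sum fun u cu => y.sum fun v cv => (cu * cv) • ppWord u v

/-- The signature expansion of order `n`: `∑_{w ⊨ n} χ(w)·w`. -/
noncomputable def sigExp (n : ℕ) : List ℕ+ →₀ ℝ :=
  ∑ w ∈ comps n, (chi w : ℝ) • Finsupp.single w 1

/-- The derivation of a single composition: the sum of all single-letter increments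
plus the sum of all insertions of a letter `1` into the gaps. -/
noncomputable def derWord (w : List ℕ+) : List ℕ+ →₀ ℝ :=
  (∑ k ∈ Finset.range w.length,
      Finsupp.single (w.take k ++ (w.getD k 1 + 1) :: w.drop (k + 1)) (1 : ℝ))
  + ∑ k ∈ Finset.range (w.length + 1),
      Finsupp.single (w.take k ++ (1 : ℕ+) :: w.drop k) (1 : ℝ)

/-- The derivation, extended linearly to the free vector space on compositions. -/
noncomputable def der (x : List ℕ+ →₀ ℝ) : List ℕ+ →₀ ℝ :=
  x.sum fun w c => c • derWord w

lemma ppWord_nil_left (v : List ℕ+) : ppWord [] v = 0 := by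
  cases v <;> rfl

lemma ppWord_nil_right (u : List ℕ+) : ppWord u [] = 0 := by
  unfold ppWord; cases u.reverse <;> rfl

lemma ppWord_snoc_cons (p : List ℕ+) (x y : ℕ+) (q : List ℕ+) :
    ppWord (p ++ [x]) (y :: q) =
      Finsupp.single (p ++ (x + 1) :: y :: q) 1
      + Finsupp.single (p ++ x :: (y + 1) :: q) 1
      + (2 : ℝ) • Finsupp.single (p ++ x :: (1 : ℕ+) :: y :: q) 1 := by
  unfold ppWord
  simp

lemma poppeMul_zero_left (y : List ℕ+ →₀ ℝ) : poppeMul 0 y = 0 := by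
  simp [poppeMul]

lemma poppeMul_zero_right (x : List ℕ+ →₀ ℝ) : poppeMul x 0 = 0 := by
  simp [poppeMul]

lemma poppeMul_add_left (x x' y : List ℕ+ →₀ ℝ) :
    poppeMul (x + x') y = poppeMul x y + poppeMul x' y := by
  unfold poppeMul
  rw [Finsupp.sum_add_index] <;> simp [add_mul, add_smul, Finsupp.sum_add]

lemma poppeMul_add_right (x y y' : List ℕ+ →₀ ℝ) :
    poppeMul x (y + y') = poppeMul x y + poppeMul x y' := by
  unfold poppeMul
  rw [← Finsupp.sum_add]
  congr 1; ext u cu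
  rw [Finsupp.sum_add_index] <;> simp [mul_add, add_smul]

lemma poppeMul_smul_left (c : ℝ) (x y : List ℕ+ →₀ ℝ) :
    poppeMul (c • x) y = c • poppeMul x y := by
  unfold poppeMul
  rw [Finsupp.sum_smul_index, Finsupp.smul_sum] <;>
    simp [mul_assoc, Finsupp.smul_sum, smul_smul]

lemma poppeMul_smul_right (c : ℝ) (x y : List ℕ+ →₀ ℝ) :
    poppeMul x (c • y) = c • poppeMul x y := by
  unfold poppeMul
  rw [Finsupp.smul_sum]
  congr 1; ext u cu
  rw [Finsupp.sum_smul_index, Finsupp.smul_sum] <;>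
    simp [smul_smul, mul_left_comm]

lemma poppeMul_single_single (u v : List ℕ+) (a b : ℝ) :
    poppeMul (Finsupp.single u a) (Finsupp.single v b) = (a * b) • ppWord u v := by
  unfold poppeMul
  rw [Finsupp.sum_single_index, Finsupp.sum_single_index] <;> simp

lemma ppWord_singleton_cons (x y : ℕ+) (q : List ℕ+) :
    ppWord [x] (y :: q) =
      Finsupp.single ((x + 1) :: y :: q) 1
      + Finsupp.single (x :: (y + 1) :: q) 1
      + (2 : ℝ) • Finsupp.single (x :: (1 : ℕ+) :: y :: q) 1 := by
  rw [show ([x] : List ℕ+) = [] ++ [x] from rfl, ppWord_snoc_cons]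
  simp

lemma ppWord_cons_snoc_cons (b : ℕ+) (m : List ℕ+) (c y : ℕ+) (q : List ℕ+) :
    ppWord (b :: (m ++ [c])) (y :: q) =
      Finsupp.single (b :: (m ++ (c + 1) :: y :: q)) 1
      + Finsupp.single (b :: (m ++ c :: (y + 1) :: q)) 1
      + (2 : ℝ) • Finsupp.single (b :: (m ++ c :: (1 : ℕ+) :: y :: q)) 1 := by
  rw [show b :: (m ++ [c]) = (b :: m) ++ [c] from rfl, ppWord_snoc_cons]
  simp

lemma poppeMul_single_nil_left (a : ℝ) (y : List ℕ+ →₀ ℝ) :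
    poppeMul (Finsupp.single [] a) y = 0 := by
  unfold poppeMul
  rw [Finsupp.sum_single_index] <;> simp [ppWord_nil_left]

lemma poppeMul_single_nil_right (a : ℝ) (x : List ℕ+ →₀ ℝ) :
    poppeMul x (Finsupp.single [] a) = 0 := by
  unfold poppeMul
  simp [Finsupp.sum_single_index, ppWord_nil_right]

lemma key (u v w : List ℕ+) :
    poppeMul (ppWord u v) (Finsupp.single w 1)
      = poppeMul (Finsupp.single u 1) (ppWord v w) := by
  rcases List.eq_nil_or_concat' u with rfl | ⟨s, a, rfl⟩
  · simp [ppWord_nil_left, poppeMul_zero_left, poppeMul_single_nil_left]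
  cases v with
  | nil => simp [ppWord_nil_right, ppWord_nil_left, poppeMul_zero_left, poppeMul_zero_right]
  | cons b v' =>
    cases w with
    | nil =>
      simp [ppWord_nil_right, poppeMul_zero_right, poppeMul_single_nil_right,
        ppWord_snoc_cons, poppeMul_add_left, poppeMul_smul_left]
    | cons d t =>
      rcases List.eq_nil_or_concat' v' with rfl | ⟨m, c, rfl⟩
      · -- v = [b]
        simp only [ppWord_snoc_cons]
        simp only [poppeMul_add_left, poppeMul_smul_left, poppeMul_single_single, one_mul]
        rw [show s ++ (a+1) :: b :: ([] : List ℕ+) = (s ++ [a+1]) ++ [b] by simp,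
            show s ++ a :: (b+1) :: ([] : List ℕ+) = (s ++ [a]) ++ [b+1] by simp,
            show s ++ a :: (1:ℕ+) :: b :: ([] : List ℕ+) = (s ++ [a, 1]) ++ [b] by simp]
        simp only [ppWord_snoc_cons]
        rw [ppWord_singleton_cons]
        simp only [poppeMul_add_right, poppeMul_smul_right, poppeMul_single_single, one_mul,
          ppWord_snoc_cons]
        simp only [List.append_assoc, List.cons_append, List.nil_append, smul_add, smul_smul]
        module
      · -- v = b :: m ++ [c]
        simp only [ppWord_snoc_cons]
        simp only [poppeMul_add_left, poppeMul_smul_left, poppeMul_single_single, one_mul]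
        rw [show s ++ (a+1) :: b :: (m ++ [c]) = (s ++ (a+1) :: b :: m) ++ [c] by simp,
            show s ++ a :: (b+1) :: (m ++ [c]) = (s ++ a :: (b+1) :: m) ++ [c] by simp,
            show s ++ a :: (1:ℕ+) :: b :: (m ++ [c]) = (s ++ a :: (1:ℕ+) :: b :: m) ++ [c] by simp]
        simp only [ppWord_snoc_cons]
        rw [ppWord_cons_snoc_cons]
        simp only [poppeMul_add_right, poppeMul_smul_right, poppeMul_single_single, one_mul,
          ppWord_snoc_cons]
        simp only [List.append_assoc, List.cons_append, List.nil_append, smul_add, smul_smul]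
        module


lemma key_base (u v w : List ℕ+) :
    poppeMul (poppeMul (Finsupp.single u (1:ℝ)) (Finsupp.single v 1)) (Finsupp.single w 1)
      = poppeMul (Finsupp.single u 1)
          (poppeMul (Finsupp.single v 1) (Finsupp.single w 1)) := by
  rw [poppeMul_single_single, poppeMul_single_single, one_mul, one_smul, one_smul]
  exact key u v w

/-- The Pöppe product on the free real vector space over nonempty compositions
is associative. -/
theorem poppeMul_assoc (x y z : List ℕ+ →₀ ℝ) :
    poppeMul (poppeMul x y) z = poppeMul x (poppeMul y z) := by
  induction x using Finsupp.induction_linear with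
  | zero => simp [poppeMul_zero_left]
  | add f g hf hg => simp [poppeMul_add_left, hf, hg]
  | single u a =>
    induction y using Finsupp.induction_linear with
    | zero => simp [poppeMul_zero_left, poppeMul_zero_right]
    | add f g hf hg => simp [poppeMul_add_left, poppeMul_add_right, hf, hg]
    | single v b =>
      induction z using Finsupp.induction_linear with
      | zero => simp [poppeMul_zero_right]
      | add f g hf hg => simp [poppeMul_add_right, hf, hg]
      | single w c =>
        have h1 : Finsupp.single u a = a • Finsupp.single u (1:ℝ) := by
          simp [Finsupp.smul_single]
        have h2 : Finsupp.single v b = b • Finsupp.single v (1:ℝ) := by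
          simp [Finsupp.smul_single]
        have h3 : Finsupp.single w c = c • Finsupp.single w (1:ℝ) := by
          simp [Finsupp.smul_single]
        rw [h1, h2, h3]
        simp only [poppeMul_smul_left, poppeMul_smul_right, smul_smul]
        rw [key_base]
        ring_nf
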